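/- arXiv:1504.06130 — 6 statements merged into one kernel-verified Lean document; each statement's English description precedes it below -/
import Mathlib

section
/- If T : ℤ² → τ is a tiling with period vector p ≠ 0 (i.e., T(x + p) = T(x) for all x), and there is a unique grid of vertical and horizontal lines cutting T into N×N macro-tiles (i.e., a unique offset (a,b) ∈ {0,…,N−1}² such that the decomposition into N×N blocks aligned at (a,b) is a valid macro-tile splitting), then both coordinates of p are divisible by N. -/
structure WangTile (C : Type) where
  left : C
  right : C
  bottom : C
  top : C

/-- A valid Wang tiling of the plane by the tile set `τ`. -/
def IsTiling {C : Type} (τ : Set (WangTile C)) (T : ℤ × ℤ → WangTile C) : Prop :=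
  (∀ x, T x ∈ τ) ∧
  (∀ x y : ℤ, (T (x, y)).right = (T (x + 1, y)).left) ∧
  (∀ x y : ℤ, (T (x, y)).top = (T (x, y + 1)).bottom)

/-- An `N × N` macro-tile: an `N × N` array of tiles. -/
def MacroTile (C : Type) (N : ℕ) := Fin N × Fin N → WangTile C

/-- The decomposition of `T` into `N × N` blocks aligned at offset `ab` is a valid
macro-tile splitting: every block belongs to `ρ`. -/
def SplitsAt {C : Type} {N : ℕ} (ρ : Set (MacroTile C N)) (T : ℤ × ℤ → WangTile C)
    (ab : Fin N × Fin N) : Prop :=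
  ∀ i j : ℤ, (fun u : Fin N × Fin N =>
    T (((ab.1 : ℕ) : ℤ) + i * N + ((u.1 : ℕ) : ℤ), ((ab.2 : ℕ) : ℤ) + j * N + ((u.2 : ℕ) : ℤ))) ∈ ρ

/-- If a tiling `T` has a nonzero period `p` and there is a *unique* offset giving a valid
splitting into `N × N` macro-tiles from `ρ`, then both coordinates of `p` are divisible by `N`. -/
theorem period_coords_divisible_by_zoom {C : Type} (N : ℕ) (hN : 0 < N)
    (τ : Set (WangTile C)) (ρ : Set (MacroTile C N))
    (T : ℤ × ℤ → WangTile C) (hT : IsTiling τ T)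
    (p : ℤ × ℤ) (hp : p ≠ 0) (hper : ∀ x : ℤ × ℤ, T (x + p) = T x)
    (huniq : ∃! ab : Fin N × Fin N, SplitsAt ρ T ab) :
    (N : ℤ) ∣ p.1 ∧ (N : ℤ) ∣ p.2 := by
  obtain ⟨ab, hab, huni⟩ := huniq
  have hNZ : (0:ℤ) < (N:ℤ) := by exact_mod_cast hN
  set a : ℤ := ((ab.1 : ℕ) : ℤ) with ha
  set b : ℤ := ((ab.2 : ℕ) : ℤ) with hb
  set a' : ℤ := (a + p.1) % N with ha'
  set b' : ℤ := (b + p.2) % N with hb'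
  have ha'0 : 0 ≤ a' := Int.emod_nonneg _ (ne_of_gt hNZ)
  have hb'0 : 0 ≤ b' := Int.emod_nonneg _ (ne_of_gt hNZ)
  have ha'lt : a' < N := Int.emod_lt_of_pos _ hNZ
  have hb'lt : b' < N := Int.emod_lt_of_pos _ hNZ
  have ha'n : a'.toNat < N := by omega
  have hb'n : b'.toNat < N := by omega
  set ab' : Fin N × Fin N := (⟨a'.toNat, ha'n⟩, ⟨b'.toNat, hb'n⟩) with hab'
  have ha'eq : ((ab'.1 : ℕ) : ℤ) = a' := Int.toNat_of_nonneg ha'0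
  have hb'eq : ((ab'.2 : ℕ) : ℤ) = b' := Int.toNat_of_nonneg hb'0
  have hda : a' = a + p.1 - N * ((a + p.1) / N) := by
    rw [ha', Int.emod_def]
  have hdb : b' = b + p.2 - N * ((b + p.2) / N) := by
    rw [hb', Int.emod_def]
  have hsplit : SplitsAt ρ T ab' := by
    intro i j
    have key : (fun u : Fin N × Fin N =>
        T (((ab'.1 : ℕ) : ℤ) + i * N + ((u.1 : ℕ) : ℤ),
           ((ab'.2 : ℕ) : ℤ) + j * N + ((u.2 : ℕ) : ℤ)))
        = (fun u : Fin N × Fin N =>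
        T (a + (i - (a + p.1) / N) * N + ((u.1 : ℕ) : ℤ),
           b + (j - (b + p.2) / N) * N + ((u.2 : ℕ) : ℤ))) := by
      funext u
      rw [ha'eq, hb'eq]
      have := hper (a + (i - (a + p.1) / N) * N + ((u.1 : ℕ) : ℤ),
           b + (j - (b + p.2) / N) * N + ((u.2 : ℕ) : ℤ))
      rw [← this]
      congr 1
      simp only [Prod.ext_iff, Prod.fst_add, Prod.snd_add, Prod.fst, Prod.snd]
      constructor <;> [rw [hda]; rw [hdb]] <;> ring
    rw [key]
    exact hab _ _
  have heq : ab' = ab := huni ab' hsplit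
  have h1 : a' = a := by rw [← ha'eq, heq]
  have h2 : b' = b := by rw [← hb'eq, heq]
  constructor
  · have : (a + p.1) % N = a := h1
    have ha0 : 0 ≤ a := Int.natCast_nonneg _
    have halt : a < N := by rw [ha]; exact_mod_cast ab.1.isLt
    have : (a + p.1) % N = a % N := by rw [this, Int.emod_eq_of_lt ha0 halt]
    have := Int.ModEq.dvd this
    simpa using this
  · have : (b + p.2) % N = b := h2
    have hb0 : 0 ≤ b := Int.natCast_nonneg _
    have hblt : b < N := by rw [hb]; exact_mod_cast ab.2.isLt
    have : (b + p.2) % N = b % N := by rw [this, Int.emod_eq_of_lt hb0 hblt]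
    have := Int.ModEq.dvd this
    simpa using this
end

section
/- A self-similar tile set admits only aperiodic tilings: if τ is a tile set implementing a set ρ of N×N macro-tiles with zoom N > 1 via an isomorphism with τ itself, then no τ-tiling T of the plane admits a nonzero period vector p with T(x+p) = T(x) for all x. -/
/-- Internal consistency of an `N × N` macro-tile over the tile set `τ`. -/
def IsMacroTileOf {C : Type} {N : ℕ} (τ : Set (WangTile C)) (A : MacroTile C N) : Prop :=
  (∀ u, A u ∈ τ) ∧
  (∀ u v : Fin N × Fin N, (v.1 : ℕ) = (u.1 : ℕ) + 1 → v.2 = u.2 → (A u).right = (A v).left) ∧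
  (∀ u v : Fin N × Fin N, (v.2 : ℕ) = (u.2 : ℕ) + 1 → v.1 = u.1 → (A u).top = (A v).bottom)

/-- Horizontal matching of macro-tiles: the right macro-color of `A` equals the
left macro-color of `B`. -/
def MacroHMatch {C : Type} {N : ℕ} (A B : MacroTile C N) : Prop :=
  ∀ u v : Fin N × Fin N, (u.1 : ℕ) = N - 1 → (v.1 : ℕ) = 0 → u.2 = v.2 →
    (A u).right = (B v).left

/-- Vertical matching of macro-tiles. -/
def MacroVMatch {C : Type} {N : ℕ} (A B : MacroTile C N) : Prop :=
  ∀ u v : Fin N × Fin N, (u.2 : ℕ) = N - 1 → (v.2 : ℕ) = 0 → u.1 = v.1 →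
    (A u).top = (B v).bottom

/-- `τ` implements the macro-tile set `ρ` with zoom factor `N`: tilings exist and every
tiling splits uniquely into `N × N` macro-tiles from `ρ`. -/
def Implements {C : Type} (τ : Set (WangTile C)) {N : ℕ} (ρ : Set (MacroTile C N)) : Prop :=
  (∃ T, IsTiling τ T) ∧
  (∀ T, IsTiling τ T → ∃! ab : Fin N × Fin N, SplitsAt ρ T ab)

/-- `τ` is self-similar with zoom `N`: it implements a set `ρ` of `N × N` macro-tiles over
`τ` via a bijection `φ : τ ≃ ρ` under which matching of tiles corresponds to matching
of macro-tiles. -/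
def SelfSimilar {C : Type} (τ : Set (WangTile C)) (N : ℕ) : Prop :=
  ∃ ρ : Set (MacroTile C N), Implements τ ρ ∧ (∀ A ∈ ρ, IsMacroTileOf τ A) ∧
    ∃ φ : {t // t ∈ τ} ≃ {A // A ∈ ρ},
      (∀ s t : {t // t ∈ τ},
        (s : WangTile C).right = (t : WangTile C).left ↔
          MacroHMatch (φ s : MacroTile C N) (φ t : MacroTile C N)) ∧
      (∀ s t : {t // t ∈ τ},
        (s : WangTile C).top = (t : WangTile C).bottom ↔
          MacroVMatch (φ s : MacroTile C N) (φ t : MacroTile C N))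

/-- Key descent step: a period of a tiling gives a tiling whose period is `p / N`. -/
lemma selfSimilar_period_step {C : Type} {N : ℕ} (hN : 1 < N) {τ : Set (WangTile C)}
    (hss : SelfSimilar τ N)
    {T : ℤ × ℤ → WangTile C} (hT : IsTiling τ T)
    {p : ℤ × ℤ} (hper : ∀ x : ℤ × ℤ, T (x + p) = T x) :
    ∃ (U : ℤ × ℤ → WangTile C) (q : ℤ × ℤ),
      IsTiling τ U ∧ (∀ x, U (x + q) = U x) ∧ p.1 = N * q.1 ∧ p.2 = N * q.2 := by
  obtain ⟨ρ, ⟨hex, huniq⟩, hmac, φ, hH, hV⟩ := hss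
  have hN0 : (0:ℤ) < (N:ℤ) := by exact_mod_cast Nat.lt_of_lt_of_le Nat.one_pos hN.le
  have hNne : (N:ℤ) ≠ 0 := ne_of_gt hN0
  obtain ⟨ab, hab, hu⟩ := huniq T hT
  set a : ℤ := ((ab.1 : ℕ) : ℤ) with ha_def
  set b : ℤ := ((ab.2 : ℕ) : ℤ) with hb_def
  have ha0 : 0 ≤ a := Int.ofNat_nonneg _
  have haN : a < N := by rw [ha_def]; exact_mod_cast ab.1.isLt
  have hb0 : 0 ≤ b := Int.ofNat_nonneg _
  have hbN : b < N := by rw [hb_def]; exact_mod_cast ab.2.isLt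
  have hper' : ∀ x y : ℤ, T (x + p.1, y + p.2) = T (x, y) := fun x y => hper (x, y)
  -- the shifted splitting offset
  have ha'0 : 0 ≤ (a + p.1) % N := Int.emod_nonneg _ hNne
  have ha'N : (a + p.1) % N < N := Int.emod_lt_of_pos _ hN0
  have hb'0 : 0 ≤ (b + p.2) % N := Int.emod_nonneg _ hNne
  have hb'N : (b + p.2) % N < N := Int.emod_lt_of_pos _ hN0
  set ab' : Fin N × Fin N :=
    (⟨((a + p.1) % N).toNat, by omega⟩, ⟨((b + p.2) % N).toNat, by omega⟩) with hab'_def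
  have hca : ((ab'.1 : ℕ) : ℤ) = (a + p.1) % N := by
    simp [hab'_def, Int.toNat_of_nonneg ha'0]
  have hcb : ((ab'.2 : ℕ) : ℤ) = (b + p.2) % N := by
    simp [hab'_def, Int.toNat_of_nonneg hb'0]
  have hsplit' : SplitsAt ρ T ab' := by
    intro i j
    set m : ℤ := (a + p.1) / N with hm
    set n : ℤ := (b + p.2) / N with hn
    have key1 : (a + p.1) % N + N * m = a + p.1 := Int.emod_add_mul_ediv _ _
    have key2 : (b + p.2) % N + N * n = b + p.2 := Int.emod_add_mul_ediv _ _
    have : (fun u : Fin N × Fin N =>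
        T (((ab'.1 : ℕ) : ℤ) + i * N + ((u.1 : ℕ) : ℤ),
          ((ab'.2 : ℕ) : ℤ) + j * N + ((u.2 : ℕ) : ℤ)))
        = (fun u : Fin N × Fin N =>
        T (a + (i - m) * N + ((u.1 : ℕ) : ℤ), b + (j - n) * N + ((u.2 : ℕ) : ℤ))) := by
      funext u
      have hpt := hper' (a + (i - m) * N + ((u.1 : ℕ) : ℤ)) (b + (j - n) * N + ((u.2 : ℕ) : ℤ))
      rw [← hpt]
      congr 2
      · rw [hca]; linear_combination key1
      · rw [hcb]; linear_combination key2
    rw [this]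
    exact hab (i - m) (j - n)
  have heq : ab' = ab := hu ab' hsplit'
  have hdvd1 : (N:ℤ) ∣ p.1 := by
    have h1 : ((ab'.1 : ℕ) : ℤ) = a := by rw [heq]
    have h2 : (a + p.1) % N = a % N := by
      rw [← hca, h1, Int.emod_eq_of_lt ha0 haN]
    have h3 := Int.emod_eq_emod_iff_emod_sub_eq_zero.mp h2
    have : p.1 % N = 0 := by simpa using h3
    exact Int.dvd_of_emod_eq_zero this
  have hdvd2 : (N:ℤ) ∣ p.2 := by
    have h1 : ((ab'.2 : ℕ) : ℤ) = b := by rw [heq]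
    have h2 : (b + p.2) % N = b % N := by
      rw [← hcb, h1, Int.emod_eq_of_lt hb0 hbN]
    have h3 := Int.emod_eq_emod_iff_emod_sub_eq_zero.mp h2
    have : p.2 % N = 0 := by simpa using h3
    exact Int.dvd_of_emod_eq_zero this
  refine ⟨fun x => (φ.symm ⟨fun u : Fin N × Fin N =>
      T (a + x.1 * N + ((u.1 : ℕ) : ℤ), b + x.2 * N + ((u.2 : ℕ) : ℤ)), hab x.1 x.2⟩ :
        {t // t ∈ τ}).val,
    (p.1 / N, p.2 / N), ?_, ?_, (Int.mul_ediv_cancel' hdvd1).symm,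
    (Int.mul_ediv_cancel' hdvd2).symm⟩
  · refine ⟨fun x => (φ.symm _).2, ?_, ?_⟩
    · intro x y
      apply (hH _ _).mpr
      rw [Equiv.apply_symm_apply, Equiv.apply_symm_apply]
      intro u v hu1 hv1 huv
      have e1 : ((u.1 : ℕ) : ℤ) = (N:ℤ) - 1 := by omega
      have e2 : ((v.1 : ℕ) : ℤ) = 0 := by exact_mod_cast hv1
      have hstep := hT.2.1 (a + x * N + ((u.1 : ℕ) : ℤ)) (b + y * N + ((u.2 : ℕ) : ℤ))
      rw [hstep]
      have hpteq : ((a + x * N + ((u.1 : ℕ) : ℤ) + 1 : ℤ), (b + y * N + ((u.2 : ℕ) : ℤ) : ℤ))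
          = ((a + (x + 1) * N + ((v.1 : ℕ) : ℤ) : ℤ), (b + y * N + ((v.2 : ℕ) : ℤ) : ℤ)) := by
        rw [Prod.mk.injEq]
        exact ⟨by rw [e1, e2]; ring, by rw [huv]⟩
      rw [hpteq]
    · intro x y
      apply (hV _ _).mpr
      rw [Equiv.apply_symm_apply, Equiv.apply_symm_apply]
      intro u v hu2 hv2 huv
      have e1 : ((u.2 : ℕ) : ℤ) = (N:ℤ) - 1 := by omega
      have e2 : ((v.2 : ℕ) : ℤ) = 0 := by exact_mod_cast hv2
      have hstep := hT.2.2 (a + x * N + ((u.1 : ℕ) : ℤ)) (b + y * N + ((u.2 : ℕ) : ℤ))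
      rw [hstep]
      have hpteq : ((a + x * N + ((u.1 : ℕ) : ℤ) : ℤ), (b + y * N + ((u.2 : ℕ) : ℤ) + 1 : ℤ))
          = ((a + x * N + ((v.1 : ℕ) : ℤ) : ℤ), (b + (y + 1) * N + ((v.2 : ℕ) : ℤ) : ℤ)) := by
        rw [Prod.mk.injEq]
        exact ⟨by rw [huv], by rw [e1, e2]; ring⟩
      rw [hpteq]
  · intro x
    have hq1 : (N:ℤ) * (p.1 / N) = p.1 := Int.mul_ediv_cancel' hdvd1
    have hq2 : (N:ℤ) * (p.2 / N) = p.2 := Int.mul_ediv_cancel' hdvd2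
    apply congrArg Subtype.val
    apply congrArg φ.symm
    apply Subtype.ext
    funext u
    show T (a + (x.1 + p.1 / N) * N + ((u.1 : ℕ) : ℤ),
        b + (x.2 + p.2 / N) * N + ((u.2 : ℕ) : ℤ))
      = T (a + x.1 * N + ((u.1 : ℕ) : ℤ), b + x.2 * N + ((u.2 : ℕ) : ℤ))
    have hpt := hper' (a + x.1 * N + ((u.1 : ℕ) : ℤ)) (b + x.2 * N + ((u.2 : ℕ) : ℤ))
    rw [← hpt]
    congr 2
    · linear_combination hq1
    · linear_combination hq2

/-- A self-similar tile set admits only aperiodic tilings. -/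
theorem selfSimilar_aperiodic {C : Type} (N : ℕ) (hN : 1 < N)
    (τ : Set (WangTile C)) (hss : SelfSimilar τ N)
    (T : ℤ × ℤ → WangTile C) (hT : IsTiling τ T)
    (p : ℤ × ℤ) (hp : p ≠ 0) (hper : ∀ x : ℤ × ℤ, T (x + p) = T x) : False := by
  have main : ∀ n : ℕ, ∀ (T : ℤ × ℤ → WangTile C) (p : ℤ × ℤ), IsTiling τ T → p ≠ 0 →
      (∀ x : ℤ × ℤ, T (x + p) = T x) → p.1.natAbs + p.2.natAbs ≤ n → False := by
    intro n
    induction n with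
    | zero =>
      intro T p _ hp0 _ hle
      apply hp0
      have h1 : p.1 = 0 := by omega
      have h2 : p.2 = 0 := by omega
      exact Prod.ext h1 h2
    | succ n ih =>
      intro T p hT hp0 hper hle
      obtain ⟨U, q, hU, hUper, h1, h2⟩ := selfSimilar_period_step hN hss hT hper
      have hq0 : q ≠ 0 := by
        intro h
        apply hp0
        apply Prod.ext
        · rw [h1, h, Prod.fst_zero, mul_zero]
        · rw [h2, h, Prod.snd_zero, mul_zero]
      apply ih U q hU hq0 hUper
      have e1 : p.1.natAbs = N * q.1.natAbs := by rw [h1, Int.natAbs_mul]; simp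
      have e2 : p.2.natAbs = N * q.2.natAbs := by rw [h2, Int.natAbs_mul]; simp
      have hs1 : 1 ≤ q.1.natAbs + q.2.natAbs := by
        by_contra h
        apply hq0
        have hq1 : q.1 = 0 := by omega
        have hq2 : q.2 = 0 := by omega
        exact Prod.ext (by simp [hq1]) (by simp [hq2])
      have hmul : N * (q.1.natAbs + q.2.natAbs) ≤ n + 1 := by
        calc N * (q.1.natAbs + q.2.natAbs) = p.1.natAbs + p.2.natAbs := by
              rw [e1, e2, Nat.mul_add]
          _ ≤ n + 1 := hle
      have h2s : 2 * (q.1.natAbs + q.2.natAbs) ≤ N * (q.1.natAbs + q.2.natAbs) :=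
        Nat.mul_le_mul_right _ hN
      have h2n : 2 * (q.1.natAbs + q.2.natAbs) ≤ n + 1 := le_trans h2s hmul
      omega
  exact main (p.1.natAbs + p.2.natAbs) T p hT hp hper le_rfl
end

section
/- Let F : ℤ² → τ be a tiling by a self-similar tile set with zoom N. If every pattern of shape 2Nᵏ × 2Nᵏ aligned with the rank-k macro-tile grid that occurs in F occurs in every square of side at least c·Nᵏ (for some constant c independent of k), then F is quasiperiodic: every finite pattern occurring in F occurs in every sufficiently large square of F. -/
/-- The pattern `P` with (finite) domain `D` occurs in `F` at position `v`. -/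
def OccursAt {A : Type} (F : ℤ × ℤ → A) (D : Finset (ℤ × ℤ)) (P : ℤ × ℤ → A)
    (v : ℤ × ℤ) : Prop :=
  ∀ d ∈ D, F (v + d) = P d

/-- The pattern `P` (with domain `D`) occurs in `F` inside the `L × L` square with
bottom-left corner `c`. -/
def OccursInSquare {A : Type} (F : ℤ × ℤ → A) (D : Finset (ℤ × ℤ)) (P : ℤ × ℤ → A)
    (c : ℤ × ℤ) (L : ℕ) : Prop :=
  ∃ v : ℤ × ℤ, OccursAt F D P v ∧
    ∀ d ∈ D, c.1 ≤ v.1 + d.1 ∧ v.1 + d.1 < c.1 + L ∧ c.2 ≤ v.2 + d.2 ∧ v.2 + d.2 < c.2 + L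

/-- `F` is quasiperiodic (uniformly recurrent): every finite pattern occurring in `F`
occurs in every sufficiently large square of `F`. -/
def UniformlyRecurrent {A : Type} (F : ℤ × ℤ → A) : Prop :=
  ∀ (D : Finset (ℤ × ℤ)) (P : ℤ × ℤ → A), (∃ v, OccursAt F D P v) →
    ∃ L : ℕ, ∀ c : ℤ × ℤ, OccursInSquare F D P c L

/-- `F` agrees at the translates `p` and `q` on an `s × s` square. -/
def AgreesOn {A : Type} (F : ℤ × ℤ → A) (p q : ℤ × ℤ) (s : ℕ) : Prop :=
  ∀ u : ℤ × ℤ, 0 ≤ u.1 → u.1 < s → 0 ≤ u.2 → u.2 < s → F (p + u) = F (q + u)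

/-- The `s × s` square at corner `p` lies inside the `L × L` square at corner `c`. -/
def InSquare (c : ℤ × ℤ) (L : ℕ) (p : ℤ × ℤ) (s : ℕ) : Prop :=
  c.1 ≤ p.1 ∧ p.1 + s ≤ c.1 + L ∧ c.2 ≤ p.2 ∧ p.2 + s ≤ c.2 + L

/-- If, for some constant `c` independent of `k`, every `2N^k × 2N^k` pattern of `F`
aligned with the rank-`k` macro-tile grid (whose origins are `a k + (N^k)·ℤ²`) occurs in
every square of side `c·N^k`, then `F` is quasiperiodic. -/
theorem quasiperiodic_of_macro_recurrence {C : Type} (N : ℕ) (hN : 2 ≤ N)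
    (τ : Set (WangTile C)) (F : ℤ × ℤ → WangTile C) (hF : IsTiling τ F)
    (a : ℕ → ℤ × ℤ) (c : ℕ) (hc : 0 < c)
    (hrec : ∀ (k : ℕ) (i j : ℤ) (w : ℤ × ℤ), ∃ p : ℤ × ℤ,
      InSquare w (c * N ^ k) p (2 * N ^ k) ∧
      AgreesOn F p ((a k).1 + i * (N : ℤ) ^ k, (a k).2 + j * (N : ℤ) ^ k) (2 * N ^ k)) :
    UniformlyRecurrent F := by
  intro D P hocc
  obtain ⟨v, hv⟩ := hocc
  rcases D.eq_empty_or_nonempty with rfl | hD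
  · exact ⟨0, fun w => ⟨w, fun d hd => absurd hd (by simp),
      fun d hd => absurd hd (by simp)⟩⟩
  set mx := D.inf' hD Prod.fst with hmx
  set Mx := D.sup' hD Prod.fst with hMx
  set my := D.inf' hD Prod.snd with hmy
  set My := D.sup' hD Prod.snd with hMy
  obtain ⟨k, hk⟩ : ∃ k, max (Mx - mx).toNat (My - my).toNat < N ^ k :=
    pow_unbounded_of_one_lt _ (by omega)
  refine ⟨c * N ^ k, fun w => ?_⟩
  set Nk : ℤ := (N : ℤ) ^ k with hNkdef
  have hNkpos : 0 < Nk := by positivity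
  have hMxmx : Mx - mx < Nk := by
    have h1 : Mx - mx ≤ ((Mx - mx).toNat : ℤ) := Int.self_le_toNat _
    have h2 : ((Mx - mx).toNat : ℤ) < Nk := by
      have h3 : (Mx - mx).toNat < N ^ k := lt_of_le_of_lt (le_max_left _ _) hk
      rw [hNkdef]; exact_mod_cast h3
    omega
  have hMymy : My - my < Nk := by
    have h1 : My - my ≤ ((My - my).toNat : ℤ) := Int.self_le_toNat _
    have h2 : ((My - my).toNat : ℤ) < Nk := by
      have h3 : (My - my).toNat < N ^ k := lt_of_le_of_lt (le_max_right _ _) hk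
      rw [hNkdef]; exact_mod_cast h3
    omega
  set i := (v.1 + mx - (a k).1) / Nk with hi
  set j := (v.2 + my - (a k).2) / Nk with hj
  obtain ⟨p, hin, hag⟩ := hrec k i j w
  set q1 : ℤ := (a k).1 + i * Nk with hq1
  set q2 : ℤ := (a k).2 + j * Nk with hq2
  have hr1a : 0 ≤ v.1 + mx - q1 := by
    have := Int.emod_nonneg (v.1 + mx - (a k).1) (ne_of_gt hNkpos)
    have he : Nk * i + (v.1 + mx - (a k).1) % Nk = v.1 + mx - (a k).1 := by
      rw [hi]; exact Int.mul_ediv_add_emod _ _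
    have hq : q1 = (a k).1 + Nk * i := by rw [hq1]; ring
    omega
  have hr1b : v.1 + mx - q1 < Nk := by
    have := Int.emod_lt_of_pos (v.1 + mx - (a k).1) hNkpos
    have he : Nk * i + (v.1 + mx - (a k).1) % Nk = v.1 + mx - (a k).1 := by
      rw [hi]; exact Int.mul_ediv_add_emod _ _
    have hq : q1 = (a k).1 + Nk * i := by rw [hq1]; ring
    omega
  have hr2a : 0 ≤ v.2 + my - q2 := by
    have := Int.emod_nonneg (v.2 + my - (a k).2) (ne_of_gt hNkpos)
    have he : Nk * j + (v.2 + my - (a k).2) % Nk = v.2 + my - (a k).2 := by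
      rw [hj]; exact Int.mul_ediv_add_emod _ _
    have hq : q2 = (a k).2 + Nk * j := by rw [hq2]; ring
    omega
  have hr2b : v.2 + my - q2 < Nk := by
    have := Int.emod_lt_of_pos (v.2 + my - (a k).2) hNkpos
    have he : Nk * j + (v.2 + my - (a k).2) % Nk = v.2 + my - (a k).2 := by
      rw [hj]; exact Int.mul_ediv_add_emod _ _
    have hq : q2 = (a k).2 + Nk * j := by rw [hq2]; ring
    omega
  obtain ⟨hin1, hin2, hin3, hin4⟩ := hin
  have hcast : ((2 * N ^ k : ℕ) : ℤ) = 2 * Nk := by push_cast [hNkdef]; ring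
  rw [hcast] at hin2 hin4
  refine ⟨(p.1 + v.1 - q1, p.2 + v.2 - q2), ?_, ?_⟩
  · intro d hd
    have hd1 : mx ≤ d.1 := Finset.inf'_le _ hd
    have hd2 : d.1 ≤ Mx := Finset.le_sup' _ hd
    have hd3 : my ≤ d.2 := Finset.inf'_le _ hd
    have hd4 : d.2 ≤ My := Finset.le_sup' _ hd
    have hu1 : 0 ≤ v.1 + d.1 - q1 := by omega
    have hu2 : v.1 + d.1 - q1 < 2 * Nk := by omega
    have hu3 : 0 ≤ v.2 + d.2 - q2 := by omega
    have hu4 : v.2 + d.2 - q2 < 2 * Nk := by omega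
    have hag' := hag (v.1 + d.1 - q1, v.2 + d.2 - q2) hu1 (by rw [hcast]; exact hu2)
      hu3 (by rw [hcast]; exact hu4)
    have e1 : (p.1 + v.1 - q1, p.2 + v.2 - q2) + d
        = p + (v.1 + d.1 - q1, v.2 + d.2 - q2) := by
      refine Prod.ext ?_ ?_ <;> simp <;> ring
    have e2 : ((a k).1 + i * (N : ℤ) ^ k, (a k).2 + j * (N : ℤ) ^ k)
        + (v.1 + d.1 - q1, v.2 + d.2 - q2) = v + d := by
      refine Prod.ext ?_ ?_ <;> simp [hq1, hq2, hNkdef] <;> ring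
    rw [e1, hag', e2]
    exact hv d hd
  · intro d hd
    have hd1 : mx ≤ d.1 := Finset.inf'_le _ hd
    have hd2 : d.1 ≤ Mx := Finset.le_sup' _ hd
    have hd3 : my ≤ d.2 := Finset.inf'_le _ hd
    have hd4 : d.2 ≤ My := Finset.le_sup' _ hd
    simp only
    refine ⟨by omega, ?_, by omega, ?_⟩ <;>
    · have : ((c * N ^ k : ℕ) : ℤ) = (c : ℤ) * Nk := by push_cast [hNkdef]; ring
      rw [this]
      rw [this] at hin2 hin4
      omega
end

section
/- If a tile set τ admits at least one tiling of the plane, then it admits at least one quasiperiodic tiling of the plane. -/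
/-! ### Auxiliary development -/

namespace QPAux

instance {C : Type} : TopologicalSpace (WangTile C) := ⊥
instance {C : Type} : DiscreteTopology (WangTile C) := ⟨rfl⟩

instance {C : Type} [Fintype C] : Finite (WangTile C) :=
  Finite.of_injective (fun t => (t.left, t.right, t.bottom, t.top)) (by
    intro a b hab; cases a; cases b; simp_all)

/-- the shift map on configurations -/
def shift {A : Type} (v : ℤ × ℤ) (F : ℤ × ℤ → A) : ℤ × ℤ → A := fun x => F (x + v)

lemma continuous_shift {A : Type} [TopologicalSpace A] (v : ℤ × ℤ) :
    Continuous (shift (A := A) v) :=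
  continuous_pi fun x => continuous_apply (x + v)

lemma shift_isTiling {C : Type} {τ : Set (WangTile C)} {T : ℤ × ℤ → WangTile C}
    (hT : IsTiling τ T) (v : ℤ × ℤ) : IsTiling τ (shift v T) := by
  obtain ⟨h1, h2, h3⟩ := hT
  refine ⟨fun x => h1 _, fun x y => ?_, fun x y => ?_⟩
  · have := h2 (x + v.1) (y + v.2)
    rw [show x + v.1 + 1 = x + 1 + v.1 by ring] at this
    exact this
  · have := h3 (x + v.1) (y + v.2)
    rw [show y + v.2 + 1 = y + 1 + v.2 by ring] at this
    exact this

lemma occursAt_shift {A : Type} (F : ℤ × ℤ → A) (D : Finset (ℤ × ℤ)) (P : ℤ × ℤ → A)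
    (v w : ℤ × ℤ) : OccursAt (shift v F) D P w ↔ OccursAt F D P (w + v) := by
  unfold OccursAt shift
  refine forall₂_congr fun d hd => ?_
  rw [add_right_comm w d v]

lemma isOpen_occursAt {C : Type} (D : Finset (ℤ × ℤ)) (P : ℤ × ℤ → WangTile C) (w : ℤ × ℤ) :
    IsOpen {F : ℤ × ℤ → WangTile C | OccursAt F D P w} := by
  have : {F : ℤ × ℤ → WangTile C | OccursAt F D P w} =
      ⋂ d ∈ D, {F : ℤ × ℤ → WangTile C | F (w + d) = P d} := by
    ext F; simp [OccursAt]
  rw [this]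
  refine isOpen_biInter_finset fun d _ => ?_
  show IsOpen ((fun F : ℤ × ℤ → WangTile C => F (w + d)) ⁻¹' {P d})
  exact IsOpen.preimage (continuous_apply (w + d))
    (isOpen_discrete ({P d} : Set (WangTile C)))

lemma isClosed_tilings {C : Type} (τ : Set (WangTile C)) :
    IsClosed {T : ℤ × ℤ → WangTile C | IsTiling τ T} := by
  have : {T : ℤ × ℤ → WangTile C | IsTiling τ T} =
      (⋂ x, {T : ℤ × ℤ → WangTile C | T x ∈ τ}) ∩
      ((⋂ x, ⋂ y, {T : ℤ × ℤ → WangTile C | (T (x, y)).right = (T (x + 1, y)).left}) ∩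
       (⋂ x, ⋂ y, {T : ℤ × ℤ → WangTile C | (T (x, y)).top = (T (x, y + 1)).bottom})) := by
    ext T; simp [IsTiling]
  rw [this]
  have hc : ∀ x : ℤ × ℤ, Continuous fun T : ℤ × ℤ → WangTile C => T x :=
    fun x => continuous_apply x
  letI : TopologicalSpace C := ⊥
  haveI : DiscreteTopology C := ⟨rfl⟩
  refine IsClosed.inter (isClosed_iInter fun x => ?_)
    (IsClosed.inter (isClosed_iInter fun x => isClosed_iInter fun y => ?_)
      (isClosed_iInter fun x => isClosed_iInter fun y => ?_))
  · exact (isClosed_discrete τ).preimage (hc x)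
  · exact isClosed_eq (by continuity) (by continuity)
  · exact isClosed_eq (by continuity) (by continuity)

end QPAux

open QPAux in
/-- If a tile set admits a tiling of the plane then it admits a quasiperiodic
(uniformly recurrent) tiling of the plane. -/
theorem exists_quasiperiodic_tiling {C : Type} [Fintype C]
    (τ : Set (WangTile C)) (h : ∃ T, IsTiling τ T) :
    ∃ T, IsTiling τ T ∧ UniformlyRecurrent T := by
  classical
  obtain ⟨T₀, hT₀⟩ := h
  -- the collection of nonempty closed shift-invariant sets of tilings
  set 𝒯 : Set ((ℤ × ℤ) → WangTile C) := {T | IsTiling τ T} with h𝒯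
  set S : Set (Set ((ℤ × ℤ) → WangTile C)) :=
    {X | X.Nonempty ∧ IsClosed X ∧ X ⊆ 𝒯 ∧ ∀ v, ∀ F ∈ X, shift v F ∈ X} with hS
  have h𝒯S : 𝒯 ∈ S := by
    refine ⟨⟨T₀, hT₀⟩, isClosed_tilings τ, subset_rfl, fun v F hF => shift_isTiling hF v⟩
  -- Zorn: a minimal element of S
  obtain ⟨X₀, -, hX₀S, hX₀min⟩ :
      ∃ m, m ⊆ 𝒯 ∧ m ∈ S ∧ ∀ a ∈ S, a ⊆ m → a = m := by
    have hbd : ∀ c ⊆ S, IsChain (· ⊆ ·) c → c.Nonempty →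
        ∃ lb ∈ S, ∀ s ∈ c, lb ⊆ s := by
      intro c hcS hchain hcne
      haveI : Nonempty c := hcne.to_subtype
      refine ⟨⋂₀ c, ⟨?_, ?_, ?_, ?_⟩, fun s hs => Set.sInter_subset_of_mem hs⟩
      · have hdir : DirectedOn (· ⊇ ·) c := by
          intro a ha b hb
          rcases hchain.total ha hb with hab | hba
          · exact ⟨a, ha, subset_rfl, hab⟩
          · exact ⟨b, hb, hba, subset_rfl⟩
        exact IsCompact.nonempty_sInter_of_directed_nonempty_isCompact_isClosed
          hdir (fun U hU => (hcS hU).1)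
          (fun U hU => (hcS hU).2.1.isCompact) (fun U hU => (hcS hU).2.1)
      · exact isClosed_sInter fun U hU => (hcS hU).2.1
      · obtain ⟨U, hU⟩ := hcne
        exact (Set.sInter_subset_of_mem hU).trans (hcS hU).2.2.1
      · intro v F hF
        exact fun U hU => (hcS hU).2.2.2 v F (hF U hU)
    obtain ⟨m, hm𝒯, hmin⟩ := zorn_superset_nonempty S hbd 𝒯 h𝒯S
    exact ⟨m, hm𝒯, hmin.prop, fun a haS ham => hmin.eq_of_le haS ham⟩
  obtain ⟨⟨T, hTX₀⟩, hX₀closed, hX₀sub, hX₀inv⟩ := hX₀S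
  refine ⟨T, hX₀sub hTX₀, ?_⟩
  intro D P ⟨v, hv⟩
  -- every element of X₀ contains the pattern somewhere
  have hall : ∀ F ∈ X₀, ∃ w, OccursAt F D P w := by
    by_contra hcon
    push_neg at hcon
    obtain ⟨F₀, hF₀X₀, hF₀⟩ := hcon
    set Y : Set ((ℤ × ℤ) → WangTile C) :=
      X₀ ∩ ⋂ w, {F | OccursAt F D P w}ᶜ with hY
    have hYS : Y ∈ S := by
      refine ⟨⟨F₀, hF₀X₀, ?_⟩, ?_, fun F hF => hX₀sub hF.1, ?_⟩
      · simp only [Set.mem_iInter, Set.mem_compl_iff, Set.mem_setOf_eq]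
        exact hF₀
      · exact hX₀closed.inter (isClosed_iInter fun w =>
          (isOpen_occursAt D P w).isClosed_compl)
      · intro u F hF
        refine ⟨hX₀inv u F hF.1, ?_⟩
        simp only [Set.mem_iInter, Set.mem_compl_iff, Set.mem_setOf_eq]
        intro w hw
        rw [occursAt_shift] at hw
        have := hF.2
        simp only [Set.mem_iInter, Set.mem_compl_iff, Set.mem_setOf_eq] at this
        exact this (w + u) hw
    have hYeq : Y = X₀ := hX₀min Y hYS Set.inter_subset_left
    have hTY : T ∈ Y := hYeq ▸ hTX₀
    have := hTY.2
    simp only [Set.mem_iInter, Set.mem_compl_iff, Set.mem_setOf_eq] at this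
    exact this v hv
  -- compactness: finitely many positions suffice
  have hcover : X₀ ⊆ ⋃ w : ℤ × ℤ, {F | OccursAt F D P w} := by
    intro F hF
    obtain ⟨w, hw⟩ := hall F hF
    exact Set.mem_iUnion.2 ⟨w, hw⟩
  obtain ⟨W, hW⟩ := hX₀closed.isCompact.elim_finite_subcover
    (fun w : ℤ × ℤ => {F | OccursAt F D P w}) (fun w => isOpen_occursAt D P w) hcover
  by_cases hD : D = ∅
  · refine ⟨0, fun c => ⟨c, ?_, ?_⟩⟩ <;> simp [OccursAt, hD]
  -- W is nonempty (X₀ is nonempty and covered)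
  have hWne : W.Nonempty := by
    obtain ⟨w, hw⟩ := Set.mem_iUnion₂.1 (hW hTX₀)
    exact ⟨w, hw.1⟩
  have hDne : D.Nonempty := Finset.nonempty_of_ne_empty hD
  -- coordinate bounds
  set E : Finset ℤ :=
    ((W ×ˢ D).image fun p => p.1.1 + p.2.1) ∪ ((W ×ˢ D).image fun p => p.1.2 + p.2.2) with hE
  have hEne : E.Nonempty := by
    refine Finset.Nonempty.inl ?_
    exact (Finset.Nonempty.image ((Finset.nonempty_product).2 ⟨hWne, hDne⟩) _)
  set m : ℤ := E.min' hEne with hm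
  set M : ℤ := E.max' hEne with hM
  have hmM : m ≤ M := E.min'_le _ (E.max'_mem hEne)
  refine ⟨(M - m + 1).toNat, fun c => ?_⟩
  have hL : (M - m + 1 : ℤ) = ((M - m + 1).toNat : ℤ) := by omega
  -- shift T so that the found occurrence lands in the square
  have hFT : shift (c.1 - m, c.2 - m) T ∈ X₀ := hX₀inv _ T hTX₀
  obtain ⟨w, hwW, hwOcc⟩ := Set.mem_iUnion₂.1 (hW hFT)
  simp only [Set.mem_setOf_eq] at hwOcc
  rw [occursAt_shift] at hwOcc
  refine ⟨w + (c.1 - m, c.2 - m), hwOcc, ?_⟩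
  intro d hd
  have h1 : w.1 + d.1 ∈ E := by
    refine Finset.mem_union_left _ (Finset.mem_image.2 ⟨(w, d), ?_, rfl⟩)
    exact Finset.mem_product.2 ⟨hwW, hd⟩
  have h2 : w.2 + d.2 ∈ E := by
    refine Finset.mem_union_right _ (Finset.mem_image.2 ⟨(w, d), ?_, rfl⟩)
    exact Finset.mem_product.2 ⟨hwW, hd⟩
  have b1l := E.min'_le _ h1
  have b1u := E.le_max' _ h1
  have b2l := E.min'_le _ h2
  have b2u := E.le_max' _ h2
  simp only [Prod.fst_add, Prod.snd_add]
  constructor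
  · omega
  constructor
  · omega
  constructor
  · omega
  · omega
end

section
/- If a self-similar tile set τ with zoom N has the property that for every k, every 2×2 pattern of rank-k macro-tiles occurring in a tiling F occurs inside every rank-(k+1) macro-tile of F, then F is quasiperiodic, with recurrence bound: every pattern of diameter < Nᵏ occurs in every square of side 3·Nᵏ⁺¹. -/
private lemma ediv_bracket (M x a : ℤ) (hM : 0 < M) :
    a + ((x - a) / M) * M ≤ x ∧ x < a + ((x - a) / M) * M + M := by
  have h1 := Int.mul_ediv_add_emod (x - a) M
  have h2 := Int.emod_nonneg (x - a) hM.ne'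
  have h3 := Int.emod_lt_of_pos (x - a) hM
  constructor <;> [skip; skip] <;> rw [mul_comm] <;> linarith

/-- Quantitative recurrence for hierarchical tilings. Suppose `F` is a tiling by a
self-similar tile set with zoom `N`, with rank-`k` grid origins `a k` (each rank-`(k+1)`
grid refining the rank-`k` grid). If for every `k` each occurring 2×2 pattern of rank-`k`
macro-tiles (a grid-aligned `2N^k × 2N^k` square of `F`) occurs, grid-aligned, inside every
rank-`(k+1)` macro-tile of `F`, then every pattern of diameter `< N^k` occurs in every
square of side `3·N^(k+1)`; in particular `F` is quasiperiodic. -/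
theorem quantitative_quasiperiodicity {C : Type} (N : ℕ) (hN : 2 ≤ N)
    (τ : Set (WangTile C)) (F : ℤ × ℤ → WangTile C) (hF : IsTiling τ F)
    (a : ℕ → ℤ × ℤ)
    (halign : ∀ k : ℕ, (N : ℤ) ^ k ∣ ((a (k + 1)).1 - (a k).1) ∧
      (N : ℤ) ^ k ∣ ((a (k + 1)).2 - (a k).2))
    (hrec : ∀ (k : ℕ) (i j i' j' : ℤ), ∃ p : ℤ × ℤ,
      (∃ s t : ℤ, p = ((a k).1 + s * (N : ℤ) ^ k, (a k).2 + t * (N : ℤ) ^ k)) ∧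
      InSquare ((a (k + 1)).1 + i' * (N : ℤ) ^ (k + 1),
                (a (k + 1)).2 + j' * (N : ℤ) ^ (k + 1))
        (N ^ (k + 1)) p (2 * N ^ k) ∧
      AgreesOn F p ((a k).1 + i * (N : ℤ) ^ k, (a k).2 + j * (N : ℤ) ^ k) (2 * N ^ k)) :
    (∀ k : ℕ, ∀ D : Finset (ℤ × ℤ),
      (∀ d ∈ D, ∀ d' ∈ D, d.1 - d'.1 < (N : ℤ) ^ k ∧ d.2 - d'.2 < (N : ℤ) ^ k) →
      ∀ P : ℤ × ℤ → WangTile C, (∃ v, OccursAt F D P v) →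
      ∀ c : ℤ × ℤ, OccursInSquare F D P c (3 * N ^ (k + 1))) ∧
    UniformlyRecurrent F := by
  have hN1 : (1:ℤ) < (N:ℤ) := by exact_mod_cast (by omega : 1 < N)
  have hNpos : (0:ℤ) < (N:ℤ) := by linarith
  have main : ∀ k : ℕ, ∀ D : Finset (ℤ × ℤ),
      (∀ d ∈ D, ∀ d' ∈ D, d.1 - d'.1 < (N : ℤ) ^ k ∧ d.2 - d'.2 < (N : ℤ) ^ k) →
      ∀ P : ℤ × ℤ → WangTile C, (∃ v, OccursAt F D P v) →
      ∀ c : ℤ × ℤ, OccursInSquare F D P c (3 * N ^ (k + 1)) := by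
    intro k D hD P hocc c
    obtain ⟨v, hv⟩ := hocc
    have hM : (0:ℤ) < (N:ℤ) ^ k := pow_pos hNpos k
    have hM' : (0:ℤ) < (N:ℤ) ^ (k+1) := pow_pos hNpos (k+1)
    rcases D.eq_empty_or_nonempty with hDe | hDne
    · subst hDe
      exact ⟨c, fun d hd => absurd hd (by simp), fun d hd => absurd hd (by simp)⟩
    obtain ⟨dx, hdx, hdxmin⟩ := D.exists_min_image (fun d => d.1) hDne
    obtain ⟨dy, hdy, hdymin⟩ := D.exists_min_image (fun d => d.2) hDne
    obtain ⟨hs1, hs2⟩ := ediv_bracket ((N:ℤ)^k) (v.1 + dx.1) (a k).1 hM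
    obtain ⟨ht1, ht2⟩ := ediv_bracket ((N:ℤ)^k) (v.2 + dy.2) (a k).2 hM
    obtain ⟨hi1, hi2⟩ := ediv_bracket ((N:ℤ)^(k+1)) (a (k+1)).1 c.1 hM'
    obtain ⟨hj1, hj2⟩ := ediv_bracket ((N:ℤ)^(k+1)) (a (k+1)).2 c.2 hM'
    obtain ⟨p, -, hpin, hagree⟩ := hrec k ((v.1 + dx.1 - (a k).1) / (N:ℤ)^k)
      ((v.2 + dy.2 - (a k).2) / (N:ℤ)^k)
      (-(((a (k+1)).1 - c.1) / (N:ℤ)^(k+1))) (-(((a (k+1)).2 - c.2) / (N:ℤ)^(k+1)))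
    obtain ⟨hp1, hp2, hp3, hp4⟩ := hpin
    push_cast at hp1 hp2 hp3 hp4
    set qx : ℤ := (a k).1 + (v.1 + dx.1 - (a k).1) / (N:ℤ)^k * (N:ℤ)^k with hqxdef
    set qy : ℤ := (a k).2 + (v.2 + dy.2 - (a k).2) / (N:ℤ)^k * (N:ℤ)^k with hqydef
    have hML : 2 * (N:ℤ)^k ≤ (N:ℤ)^(k+1) := by
      rw [pow_succ, mul_comm]; nlinarith [hM]
    have hcast : ((3 * N ^ (k+1) : ℕ) : ℤ) = 3 * (N:ℤ)^(k+1) := by push_cast; ring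
    refine ⟨(p.1 + v.1 - qx, p.2 + v.2 - qy), ?_, ?_⟩
    · intro d hd
      have hbx := (hD d hd dx hdx).1
      have hby := (hD d hd dy hdy).2
      have hu1 : 0 ≤ v.1 + d.1 - qx := by have := hdxmin d hd; linarith
      have hu2 : v.1 + d.1 - qx < 2 * (N:ℤ)^k := by linarith
      have hu3 : 0 ≤ v.2 + d.2 - qy := by have := hdymin d hd; linarith
      have hu4 : v.2 + d.2 - qy < 2 * (N:ℤ)^k := by linarith
      have h := hagree (v.1 + d.1 - qx, v.2 + d.2 - qy) hu1
        (by push_cast; exact hu2) hu3 (by push_cast; exact hu4)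
      have e1 : ((p.1 + v.1 - qx, p.2 + v.2 - qy) : ℤ × ℤ) + d
          = p + ((v.1 + d.1 - qx, v.2 + d.2 - qy) : ℤ × ℤ) := by
        simp only [Prod.ext_iff, Prod.fst_add, Prod.snd_add]
        exact ⟨by ring, by ring⟩
      have e2 : v + d = ((qx, qy) : ℤ × ℤ)
          + ((v.1 + d.1 - qx, v.2 + d.2 - qy) : ℤ × ℤ) := by
        simp only [Prod.ext_iff, Prod.fst_add, Prod.snd_add]
        exact ⟨by ring, by ring⟩
      rw [e1, h, ← e2]
      exact hv d hd
    · intro d hd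
      have hbx := (hD d hd dx hdx).1
      have hby := (hD d hd dy hdy).2
      have hmx := hdxmin d hd
      have hmy := hdymin d hd
      refine ⟨by simp only; linarith, ?_, by simp only; linarith, ?_⟩
      · rw [hcast]; simp only; linarith
      · rw [hcast]; simp only; linarith
  refine ⟨main, ?_⟩
  intro D P hocc
  set Bn : ℕ := D.sup (fun d => d.1.natAbs ⊔ d.2.natAbs) with hBn
  obtain ⟨k, hk⟩ := pow_unbounded_of_one_lt (2 * (Bn:ℤ)) hN1
  refine ⟨3 * N ^ (k+1), fun c => main k D ?_ P hocc c⟩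
  intro d hd d' hd'
  have h1 : d.1.natAbs ⊔ d.2.natAbs ≤ Bn := by
    rw [hBn]; exact Finset.le_sup (f := fun d : ℤ × ℤ => d.1.natAbs ⊔ d.2.natAbs) hd
  have h2 : d'.1.natAbs ⊔ d'.2.natAbs ≤ Bn := by
    rw [hBn]; exact Finset.le_sup (f := fun d : ℤ × ℤ => d.1.natAbs ⊔ d.2.natAbs) hd'
  simp only [sup_le_iff] at h1 h2
  have e1 : d.1 - d'.1 ≤ 2 * (Bn:ℤ) := by omega
  have e2 : d.2 - d'.2 ≤ 2 * (Bn:ℤ) := by omega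
  exact ⟨lt_of_le_of_lt e1 hk, lt_of_le_of_lt e2 hk⟩
end

section
/- Let M be a deterministic Turing machine simulated by a space-time diagram tiling in the standard way (rows are configurations, time goes up). Then the resulting local rule is 2×2-deterministic: the contents of any 2×2 block of cells in the diagram are uniquely determined by the colors on the boundary of the block (the 8 colors on the outer sides of the four cells). -/
/-- Colors for the space-time-diagram tile set of a Turing machine with states `Q` and
tape alphabet `Γ`: horizontal colors carry a tape symbol, possibly with the head and its
state (`Sum.inl`); vertical colors carry an optional head-crossing signal, a state
together with a direction bit (`Sum.inr`). -/
abbrev TMColor (Q Γ : Type) : Type := (Γ ⊕ Q × Γ) ⊕ Option (Q × Bool)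

/-- The standard Wang tile set simulating the deterministic machine `δ : Q → Γ → Q × Γ × Bool`
(new state, written symbol, direction: `true` = right) in a space-time diagram, rows being
configurations and time going up: quiescent tiles, action tiles (head executes a step and
emits a signal left or right), and receiving tiles (head arrives from a neighbor). -/
def tmTiles {Q Γ : Type} (δ : Q → Γ → Q × Γ × Bool) : Set (WangTile (TMColor Q Γ)) :=
  {t | (∃ a : Γ, t = ⟨.inr none, .inr none, .inl (.inl a), .inl (.inl a)⟩) ∨
       (∃ q a, (δ q a).2.2 = true ∧
         t = ⟨.inr none, .inr (some ((δ q a).1, true)),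
              .inl (.inr (q, a)), .inl (.inl (δ q a).2.1)⟩) ∨
       (∃ q a, (δ q a).2.2 = false ∧
         t = ⟨.inr (some ((δ q a).1, false)), .inr none,
              .inl (.inr (q, a)), .inl (.inl (δ q a).2.1)⟩) ∨
       (∃ q a, t = ⟨.inr (some (q, true)), .inr none,
              .inl (.inl a), .inl (.inr (q, a))⟩) ∨
       (∃ q a, t = ⟨.inr none, .inr (some (q, false)),
              .inl (.inl a), .inl (.inr (q, a))⟩)}

/-- A correctly tiled 2×2 block: `f i j` is the tile in column `i`, row `j`, with
matching internal edges. -/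
def Block2x2 {Q Γ : Type} (δ : Q → Γ → Q × Γ × Bool)
    (f : Fin 2 → Fin 2 → WangTile (TMColor Q Γ)) : Prop :=
  (∀ i j, f i j ∈ tmTiles δ) ∧
  (f 0 0).right = (f 1 0).left ∧ (f 0 1).right = (f 1 1).left ∧
  (f 0 0).top = (f 0 1).bottom ∧ (f 1 0).top = (f 1 1).bottom

lemma det_lrb {Q Γ : Type} (δ : Q → Γ → Q × Γ × Bool) {t s : WangTile (TMColor Q Γ)}
    (ht : t ∈ tmTiles δ) (hs : s ∈ tmTiles δ)
    (hl : t.left = s.left) (hr : t.right = s.right) (hb : t.bottom = s.bottom) : t = s := by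
  rcases ht with ⟨a,rfl⟩|⟨q,a,hd,rfl⟩|⟨q,a,hd,rfl⟩|⟨q,a,rfl⟩|⟨q,a,rfl⟩ <;>
  rcases hs with ⟨a',rfl⟩|⟨q',a',hd',rfl⟩|⟨q',a',hd',rfl⟩|⟨q',a',rfl⟩|⟨q',a',rfl⟩ <;>
  simp_all

lemma edge_det {Q Γ : Type} (δ : Q → Γ → Q × Γ × Bool) {t0 t1 s0 s1 : WangTile (TMColor Q Γ)}
    (ht0 : t0 ∈ tmTiles δ) (ht1 : t1 ∈ tmTiles δ) (hs0 : s0 ∈ tmTiles δ) (hs1 : s1 ∈ tmTiles δ)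
    (he : t0.right = t1.left) (he' : s0.right = s1.left)
    (hl : t0.left = s0.left) (hr : t1.right = s1.right)
    (hb0 : t0.bottom = s0.bottom) (hb1 : t1.bottom = s1.bottom) : t0.right = s0.right := by
  rcases ht0 with ⟨a,rfl⟩|⟨q,a,hd,rfl⟩|⟨q,a,hd,rfl⟩|⟨q,a,rfl⟩|⟨q,a,rfl⟩ <;>
  rcases hs0 with ⟨a',rfl⟩|⟨q',a',hd',rfl⟩|⟨q',a',hd',rfl⟩|⟨q',a',rfl⟩|⟨q',a',rfl⟩ <;>
  rcases ht1 with ⟨b,rfl⟩|⟨p,b,ed,rfl⟩|⟨p,b,ed,rfl⟩|⟨p,b,rfl⟩|⟨p,b,rfl⟩ <;>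
  rcases hs1 with ⟨b',rfl⟩|⟨p',b',ed',rfl⟩|⟨p',b',ed',rfl⟩|⟨p',b',rfl⟩|⟨p',b',rfl⟩ <;>
  simp_all

/-- 2×2-determinicity of the space-time diagram tile set of a deterministic Turing
machine: the four tiles of a correctly tiled 2×2 block are uniquely determined by the
eight colors on the boundary of the block. -/
theorem tm_tiles_two_by_two_deterministic {Q Γ : Type} (δ : Q → Γ → Q × Γ × Bool)
    (f g : Fin 2 → Fin 2 → WangTile (TMColor Q Γ))
    (hf : Block2x2 δ f) (hg : Block2x2 δ g)
    (hbottom : (f 0 0).bottom = (g 0 0).bottom ∧ (f 1 0).bottom = (g 1 0).bottom)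
    (htop : (f 0 1).top = (g 0 1).top ∧ (f 1 1).top = (g 1 1).top)
    (hleft : (f 0 0).left = (g 0 0).left ∧ (f 0 1).left = (g 0 1).left)
    (hright : (f 1 0).right = (g 1 0).right ∧ (f 1 1).right = (g 1 1).right) :
    f = g := by
  obtain ⟨hfmem, hfe0, hfe1, hfv0, hfv1⟩ := hf
  obtain ⟨hgmem, hge0, hge1, hgv0, hgv1⟩ := hg
  have e0 : (f 0 0).right = (g 0 0).right :=
    edge_det δ (hfmem 0 0) (hfmem 1 0) (hgmem 0 0) (hgmem 1 0)
      hfe0 hge0 hleft.1 hright.1 hbottom.1 hbottom.2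
  have h00 : f 0 0 = g 0 0 :=
    det_lrb δ (hfmem 0 0) (hgmem 0 0) hleft.1 e0 hbottom.1
  have h10 : f 1 0 = g 1 0 :=
    det_lrb δ (hfmem 1 0) (hgmem 1 0) (hfe0 ▸ hge0 ▸ e0) hright.1 hbottom.2
  have hb01 : (f 0 1).bottom = (g 0 1).bottom := by rw [← hfv0, ← hgv0, h00]
  have hb11 : (f 1 1).bottom = (g 1 1).bottom := by rw [← hfv1, ← hgv1, h10]
  have e1 : (f 0 1).right = (g 0 1).right :=
    edge_det δ (hfmem 0 1) (hfmem 1 1) (hgmem 0 1) (hgmem 1 1)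
      hfe1 hge1 hleft.2 hright.2 hb01 hb11
  have h01 : f 0 1 = g 0 1 :=
    det_lrb δ (hfmem 0 1) (hgmem 0 1) hleft.2 e1 hb01
  have h11 : f 1 1 = g 1 1 :=
    det_lrb δ (hfmem 1 1) (hgmem 1 1) (hfe1 ▸ hge1 ▸ e1) hright.2 hb11
  funext i j
  fin_cases i <;> fin_cases j <;> assumption
end
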